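/- Let w ≥ 2 be an integer and let n ≤ 2^(w-2) be a positive integer. Let α ≥ 1 and let y_{i,j} (for 1 ≤ i ≤ n, 1 ≤ j ≤ α) be integers satisfying -2^w < y_{i,j} < 2^w for all i, j (i.e., each input superaccumulator is regularized with window size w). For each j define the column sum s_j = Σ_{i=1}^n y_{i,j}, and suppose integers c_1, c_2, ..., c_{α+1} and r_1, ..., r_α are given with c_1 = 0, s_j = c_{j+1}·2^(w-1) + r_j, and -2^(w-1) < r_j < 2^(w-1) for all j. Then the updated values s'_j = r_j + c_j satisfy -2^w < s'_j < 2^w for all j = 1, ..., α; that is, the result of the single-round summation is again a regularized superaccumulator. -/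
import Mathlib


/-- Summing `n ≤ 2^(w-2)` regularized superaccumulators componentwise, splitting each
column sum `s j = c (j+1) * 2^(w-1) + r j` with `-2^(w-1) < r j < 2^(w-1)` and `c 1 = 0`,
yields updated components `r j + c j` that are again regularized: `-2^w < r j + c j < 2^w`. -/
theorem superaccumulator_sum_regularized
    (w n α : ℕ) (hw : 2 ≤ w) (hn : 0 < n) (hn' : (n : ℤ) ≤ 2 ^ (w - 2)) (hα : 1 ≤ α)
    (y : ℕ → ℕ → ℤ)
    (hy : ∀ i ∈ Finset.Icc 1 n, ∀ j ∈ Finset.Icc 1 α,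
      -2 ^ w < y i j ∧ y i j < 2 ^ w)
    (s : ℕ → ℤ) (hs : ∀ j ∈ Finset.Icc 1 α, s j = ∑ i ∈ Finset.Icc 1 n, y i j)
    (c r : ℕ → ℤ) (hc1 : c 1 = 0)
    (hsplit : ∀ j ∈ Finset.Icc 1 α, s j = c (j + 1) * 2 ^ (w - 1) + r j)
    (hr : ∀ j ∈ Finset.Icc 1 α, -2 ^ (w - 1) < r j ∧ r j < 2 ^ (w - 1)) :
    ∀ j ∈ Finset.Icc 1 α, -2 ^ w < r j + c j ∧ r j + c j < 2 ^ w := by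
  have hpow : (0:ℤ) < 2 ^ (w - 1) := by positivity
  have hsq : (2:ℤ) ^ (w - 2) * 2 ^ w = 2 ^ (w - 1) * 2 ^ (w - 1) := by
    rw [← pow_add, ← pow_add]; congr 1; omega
  have hww : (2:ℤ) ^ w = 2 ^ (w - 1) + 2 ^ (w - 1) := by
    rw [← two_mul, ← pow_succ']; congr 1; omega
  -- bound on s j
  have hsb : ∀ j ∈ Finset.Icc 1 α, -(n:ℤ) * 2 ^ w ≤ s j ∧ s j ≤ (n:ℤ) * 2 ^ w := by
    intro j hj
    have hcard : (Finset.Icc 1 n).card = n := by rw [Nat.card_Icc]; omega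
    constructor
    · rw [hs j hj]
      calc -(n:ℤ) * 2 ^ w = ∑ _i ∈ Finset.Icc 1 n, (-(2:ℤ) ^ w) := by
            rw [Finset.sum_const, hcard]; push_cast; ring
        _ ≤ _ := Finset.sum_le_sum fun i hi => (hy i hi j hj).1.le
    · rw [hs j hj]
      calc ∑ i ∈ Finset.Icc 1 n, y i j ≤ ∑ _i ∈ Finset.Icc 1 n, (2:ℤ) ^ w :=
            Finset.sum_le_sum fun i hi => (hy i hi j hj).2.le
        _ = (n:ℤ) * 2 ^ w := by rw [Finset.sum_const, hcard]; push_cast; ring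
  -- bound on carries
  have hcb : ∀ j ∈ Finset.Icc 1 α, -2 ^ (w - 1) ≤ c (j + 1) ∧ c (j + 1) ≤ 2 ^ (w - 1) := by
    intro j hj
    have h1 := hsb j hj
    have h2 := hr j hj
    have h3 := hsplit j hj
    have hn2 : (n:ℤ) * 2 ^ w ≤ 2 ^ (w - 1) * 2 ^ (w - 1) := by
      rw [← hsq]
      have : (0:ℤ) < 2 ^ w := by positivity
      nlinarith
    constructor
    · have : (-(2 ^ (w - 1)) - 1) * 2 ^ (w - 1) < c (j + 1) * 2 ^ (w - 1) := by nlinarith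
      have := lt_of_mul_lt_mul_right this hpow.le
      omega
    · have : c (j + 1) * 2 ^ (w - 1) < (2 ^ (w - 1) + 1) * 2 ^ (w - 1) := by nlinarith
      have := lt_of_mul_lt_mul_right this hpow.le
      omega
  intro j hj
  simp only [Finset.mem_Icc] at hj
  have h2 := hr j (Finset.mem_Icc.mpr hj)
  rcases eq_or_lt_of_le hj.1 with h1 | h1
  · subst h1
    rw [hc1]
    constructor <;> [linarith [h2.1]; linarith [h2.2]]
  · have hj1 : j - 1 ∈ Finset.Icc 1 α := Finset.mem_Icc.mpr ⟨by omega, by omega⟩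
    have hc := hcb (j - 1) hj1
    rw [show j - 1 + 1 = j by omega] at hc
    constructor <;> [nlinarith [h2.1, hc.1]; nlinarith [h2.2, hc.2]]
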